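/- For any operator R on a Hilbert space, SRG(I + R) = 1 + SRG(R), where I is the identity operator and 1 + S := {1 + z : z ∈ S}. -/

import Mathlib

variable {H : Type*} [NormedAddCommGroup H] [InnerProductSpace ℝ H]

/-- The angle `∠(u,y) = arccos(Re⟨u,y⟩/(‖u‖‖y‖))`. -/
noncomputable def srgAngle (u y : H) : ℝ := Real.arccos ((inner ℝ u y : ℝ) / (‖u‖ * ‖y‖))

/-- The Scaled Relative Graph of an operator `R` on a Hilbert space. -/
noncomputable def SRG (R : H → H) : Set ℂ :=
  {z | ∃ u₁ u₂ : H, u₁ ≠ u₂ ∧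
    (z = (‖R u₁ - R u₂‖ / ‖u₁ - u₂‖ : ℝ) *
          Complex.exp ((srgAngle (u₁ - u₂) (R u₁ - R u₂) : ℂ) * Complex.I) ∨
     z = (‖R u₁ - R u₂‖ / ‖u₁ - u₂‖ : ℝ) *
          Complex.exp (-(srgAngle (u₁ - u₂) (R u₁ - R u₂) : ℂ) * Complex.I))}

lemma srg_pt_re (u y : H) (hu : u ≠ 0) :
    (‖y‖ / ‖u‖) * Real.cos (srgAngle u y) = (inner ℝ u y : ℝ) / ‖u‖ ^ 2 := by
  by_cases hy : y = 0
  · simp [hy, srgAngle]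
  have hun : ‖u‖ ≠ 0 := norm_ne_zero_iff.mpr hu
  have hyn : ‖y‖ ≠ 0 := norm_ne_zero_iff.mpr hy
  have hpos : 0 < ‖u‖ * ‖y‖ := by positivity
  have h1 : |(inner ℝ u y : ℝ)| ≤ ‖u‖ * ‖y‖ := abs_real_inner_le_norm u y
  have habs : |(inner ℝ u y : ℝ) / (‖u‖ * ‖y‖)| ≤ 1 := by
    rw [abs_div, abs_of_pos hpos, div_le_one hpos]; exact h1
  obtain ⟨hl, hr⟩ := abs_le.mp habs
  rw [srgAngle, Real.cos_arccos hl hr]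
  field_simp

lemma srg_pt_im (u y : H) (hu : u ≠ 0) :
    (‖y‖ / ‖u‖) * Real.sin (srgAngle u y)
      = Real.sqrt (‖y‖ ^ 2 / ‖u‖ ^ 2 - ((inner ℝ u y : ℝ) / ‖u‖ ^ 2) ^ 2) := by
  have hun : ‖u‖ ≠ 0 := norm_ne_zero_iff.mpr hu
  by_cases hy : y = 0
  · simp [hy, srgAngle]
  have hyn : ‖y‖ ≠ 0 := norm_ne_zero_iff.mpr hy
  rw [srgAngle, Real.sin_arccos]
  have hnn : (0:ℝ) ≤ ‖y‖ / ‖u‖ := by positivity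
  rw [show (‖y‖ / ‖u‖) * Real.sqrt (1 - ((inner ℝ u y : ℝ) / (‖u‖ * ‖y‖)) ^ 2)
      = Real.sqrt ((‖y‖ / ‖u‖) ^ 2 * (1 - ((inner ℝ u y : ℝ) / (‖u‖ * ‖y‖)) ^ 2)) by
    rw [Real.sqrt_mul (sq_nonneg _), Real.sqrt_sq hnn]]
  congr 1
  field_simp

lemma srg_pt_eq (u y : H) (hu : u ≠ 0) :
    ((‖y‖ / ‖u‖ : ℝ) : ℂ) * Complex.exp ((srgAngle u y : ℂ) * Complex.I)
      = (((inner ℝ u y : ℝ) / ‖u‖ ^ 2 : ℝ) : ℂ)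
        + ((Real.sqrt (‖y‖ ^ 2 / ‖u‖ ^ 2 - ((inner ℝ u y : ℝ) / ‖u‖ ^ 2) ^ 2) : ℝ) : ℂ)
            * Complex.I := by
  rw [Complex.exp_mul_I, ← Complex.ofReal_cos, ← Complex.ofReal_sin,
    ← srg_pt_im u y hu, ← srg_pt_re u y hu]
  push_cast
  ring

lemma srg_shift_plus (u y : H) (hu : u ≠ 0) :
    ((‖u + y‖ / ‖u‖ : ℝ) : ℂ) * Complex.exp ((srgAngle u (u + y) : ℂ) * Complex.I)
      = 1 + ((‖y‖ / ‖u‖ : ℝ) : ℂ) * Complex.exp ((srgAngle u y : ℂ) * Complex.I) := by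
  have hun : ‖u‖ ≠ 0 := norm_ne_zero_iff.mpr hu
  rw [srg_pt_eq u (u + y) hu, srg_pt_eq u y hu]
  have h1 : (inner ℝ u (u + y) : ℝ) = ‖u‖ ^ 2 + inner ℝ u y := by
    rw [inner_add_right, real_inner_self_eq_norm_sq]
  have h2 : ‖u + y‖ ^ 2 = ‖u‖ ^ 2 + 2 * inner ℝ u y + ‖y‖ ^ 2 := norm_add_sq_real u y
  have e1 : (inner ℝ u (u + y) : ℝ) / ‖u‖ ^ 2 = 1 + (inner ℝ u y : ℝ) / ‖u‖ ^ 2 := by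
    rw [h1]; field_simp
  have e2 : ‖u + y‖ ^ 2 / ‖u‖ ^ 2 - (1 + (inner ℝ u y : ℝ) / ‖u‖ ^ 2) ^ 2
      = ‖y‖ ^ 2 / ‖u‖ ^ 2 - ((inner ℝ u y : ℝ) / ‖u‖ ^ 2) ^ 2 := by
    rw [h2]; field_simp; ring
  rw [e1, e2]
  push_cast
  ring

lemma srg_neg_conj (r θ : ℝ) :
    ((r : ℝ) : ℂ) * Complex.exp (-(θ : ℂ) * Complex.I)
      = starRingEnd ℂ (((r : ℝ) : ℂ) * Complex.exp ((θ : ℂ) * Complex.I)) := by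
  rw [map_mul, ← Complex.exp_conj, map_mul, Complex.conj_ofReal, Complex.conj_ofReal,
    Complex.conj_I]
  ring_nf

lemma srg_shift_minus (u y : H) (hu : u ≠ 0) :
    ((‖u + y‖ / ‖u‖ : ℝ) : ℂ) * Complex.exp (-(srgAngle u (u + y) : ℂ) * Complex.I)
      = 1 + ((‖y‖ / ‖u‖ : ℝ) : ℂ) * Complex.exp (-(srgAngle u y : ℂ) * Complex.I) := by
  rw [srg_neg_conj, srg_neg_conj, srg_shift_plus u y hu, map_add, map_one]

/-- **SRG translation by the identity**: `SRG(I + R) = 1 + SRG(R)`. -/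
theorem SRG_one_add (R : H → H) :
    SRG (fun u => u + R u) = (fun z : ℂ => 1 + z) '' SRG R := by
  ext z
  simp only [SRG, Set.mem_image, Set.mem_setOf_eq]
  constructor
  · rintro ⟨u₁, u₂, hne, h⟩
    have hu : u₁ - u₂ ≠ 0 := sub_ne_zero.mpr hne
    have hrw : (u₁ + R u₁) - (u₂ + R u₂) = (u₁ - u₂) + (R u₁ - R u₂) := by abel
    rcases h with h | h
    · exact ⟨_, ⟨u₁, u₂, hne, Or.inl rfl⟩, by
        rw [h, hrw, srg_shift_plus (u₁ - u₂) (R u₁ - R u₂) hu]⟩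
    · exact ⟨_, ⟨u₁, u₂, hne, Or.inr rfl⟩, by
        rw [h, hrw, srg_shift_minus (u₁ - u₂) (R u₁ - R u₂) hu]⟩
  · rintro ⟨w, ⟨u₁, u₂, hne, h⟩, rfl⟩
    have hu : u₁ - u₂ ≠ 0 := sub_ne_zero.mpr hne
    have hrw : (u₁ + R u₁) - (u₂ + R u₂) = (u₁ - u₂) + (R u₁ - R u₂) := by abel
    refine ⟨u₁, u₂, hne, ?_⟩
    rcases h with h | h
    · exact Or.inl (by
        rw [h, hrw, srg_shift_plus (u₁ - u₂) (R u₁ - R u₂) hu])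
    · exact Or.inr (by
        rw [h, hrw, srg_shift_minus (u₁ - u₂) (R u₁ - R u₂) hu])
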